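/- Let 𝒜 be a finite k-uniform family, S a finite set, and h a positive integer, and suppose the following regularity identity holds for h: for every family G ⊆ 𝒜(S), the ratio |G|/|𝒜(S)| equals the average over H ∈ ∂_h(𝒜(S)) of |G(H)|/|𝒜(S ∪ H)|. Let F ⊆ 𝒜(S) be a nonempty τ-homogeneous family with respect to 𝒜(S). Then |∂_h F| ≥ τ^{−h} · |∂_h(𝒜(S))|. -/

import Mathlib

open Finset
open scoped Classical

variable {γ : Type*}

/-- `F(B) = {F \ B : F ∈ F, B ⊆ F}`. -/
def famRestrict [DecidableEq γ] (F : Finset (Finset γ)) (B : Finset γ) : Finset (Finset γ) :=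
  (F.filter fun A => B ⊆ A).image fun A => A \ B

/-- `F[ℬ] = {F ∈ F : ∃ B ∈ ℬ, B ⊆ F}`. -/
def famAbove [DecidableEq γ] (F ℬ : Finset (Finset γ)) : Finset (Finset γ) :=
  F.filter fun A => ∃ B ∈ ℬ, B ⊆ A

/-- The shadow `∂_h F`. -/
def famShadow [DecidableEq γ] (F : Finset (Finset γ)) (h : ℕ) : Finset (Finset γ) :=
  F.biUnion fun A => Finset.powersetCard h A

/-- The shadow `∂_{≤h} F`. -/
def famShadowLe [DecidableEq γ] (F : Finset (Finset γ)) (h : ℕ) : Finset (Finset γ) :=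
  (Finset.range (h + 1)).biUnion fun j => famShadow F j

/-- `P` is a sunflower with `s` petals and core `K`: `P` consists of `s` sets, `K` is
the intersection of all members of `P`, and any two distinct members intersect in `K`. -/
def IsSunflower [DecidableEq γ] (P : Finset (Finset γ)) (s : ℕ) (K : Finset γ) : Prop :=
  P.card = s ∧ ∃ hP : P.Nonempty, K = P.inf' hP id ∧
    ∀ A ∈ P, ∀ B ∈ P, A ≠ B → A ∩ B = K

/-- `F` contains no sunflower with `s` petals (with arbitrary core). -/
def SunflowerFree [DecidableEq γ] (F : Finset (Finset γ)) (s : ℕ) : Prop :=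
  ∀ P ⊆ F, ∀ K : Finset γ, ¬ IsSunflower P s K

/-- `φ(s,t)`: the maximal size of a family of `t`-element sets with no sunflower
with `s` petals. -/
noncomputable def phi (s t : ℕ) : ℕ :=
  sSup {m : ℕ | ∃ F : Finset (Finset ℕ),
    (∀ A ∈ F, A.card = t) ∧ SunflowerFree F s ∧ F.card = m}

/-- `G` is `R`-spread: `|G(X)| ≤ R^{-|X|} |G|` for every `X`. -/
def IsSpread [DecidableEq γ] (R : ℝ) (G : Finset (Finset γ)) : Prop :=
  ∀ X : Finset γ, ((famRestrict G X).card : ℝ) ≤ R ^ (-(X.card : ℤ)) * G.card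

/-- `F` is `k`-uniform. -/
def IsUniform (F : Finset (Finset γ)) (k : ℕ) : Prop := ∀ A ∈ F, A.card = k

/-- `𝒜` is `(r,t)`-spread: `𝒜(T)` is `r`-spread for every `T ∈ ∂_{≤t} 𝒜`. -/
def IsRTSpread [DecidableEq γ] (𝒜 : Finset (Finset γ)) (r : ℝ) (t : ℕ) : Prop :=
  ∀ T ∈ famShadowLe 𝒜 t, IsSpread r (famRestrict 𝒜 T)

/-- `F` is `τ`-homogeneous with respect to `𝒜`:
`|F(X)| ⬝ |𝒜| ≤ τ^{|X|} ⬝ |F| ⬝ |𝒜(X)|` for every `X`. -/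
def IsHomog [DecidableEq γ] (τ : ℝ) (F 𝒜 : Finset (Finset γ)) : Prop :=
  ∀ X : Finset γ,
    ((famRestrict F X).card : ℝ) * 𝒜.card ≤ τ ^ X.card * F.card * (famRestrict 𝒜 X).card


lemma mem_famRestrict' [DecidableEq γ] {F : Finset (Finset γ)} {X B : Finset γ} :
    B ∈ famRestrict F X ↔ ∃ A ∈ F, X ⊆ A ∧ A \ X = B := by
  simp [famRestrict]; aesop

lemma mem_famShadow' [DecidableEq γ] {F : Finset (Finset γ)} {H : Finset γ} {h : ℕ} :
    H ∈ famShadow F h ↔ ∃ A ∈ F, H ⊆ A ∧ H.card = h := by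
  simp [famShadow, Finset.mem_powersetCard]

lemma restrict_restrict [DecidableEq γ] (𝒜 : Finset (Finset γ)) (S H : Finset γ)
    (hd : Disjoint S H) :
    famRestrict (famRestrict 𝒜 S) H = famRestrict 𝒜 (S ∪ H) := by
  ext B
  simp only [mem_famRestrict']
  constructor
  · rintro ⟨C, ⟨A, hA, hSA, rfl⟩, hHC, rfl⟩
    exact ⟨A, hA, union_subset hSA (hHC.trans (sdiff_subset)),
      by ext x; simp; tauto⟩
  · rintro ⟨A, hA, hSH, rfl⟩
    refine ⟨A \ S, ⟨A, hA, (union_subset_iff.mp hSH).1, rfl⟩, ?_, ?_⟩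
    · exact subset_sdiff.mpr ⟨(union_subset_iff.mp hSH).2, hd.symm⟩
    · ext x; simp; tauto

/-- Proposition 5.7 (shadows of homogeneous families are large). -/
theorem shadow_of_homogeneous {α : Type*} [DecidableEq α]
    (k : ℕ) (𝒜 : Finset (Finset α)) (hAunif : IsUniform 𝒜 k)
    (S : Finset α) (h : ℕ) (hh : 0 < h)
    (hreg : ∀ G ⊆ famRestrict 𝒜 S,
      (G.card : ℝ) / ((famRestrict 𝒜 S).card : ℝ) =
        (∑ H ∈ famShadow (famRestrict 𝒜 S) h,
            ((famRestrict G H).card : ℝ) / ((famRestrict 𝒜 (S ∪ H)).card : ℝ))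
          / ((famShadow (famRestrict 𝒜 S) h).card : ℝ))
    (τ : ℝ) (F : Finset (Finset α)) (hFA : F ⊆ famRestrict 𝒜 S) (hFne : F.Nonempty)
    (hhom : IsHomog τ F (famRestrict 𝒜 S)) :
    τ ^ (-(h:ℤ)) * ((famShadow (famRestrict 𝒜 S) h).card : ℝ) ≤
      ((famShadow F h).card : ℝ) := by
  set 𝒜' := famRestrict 𝒜 S with h𝒜'
  set 𝒮 := famShadow 𝒜' h with h𝒮
  set term : Finset α → ℝ := fun H =>
    ((famRestrict F H).card : ℝ) / ((famRestrict 𝒜 (S ∪ H)).card : ℝ) with hterm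
  have h𝒜'ne : 𝒜'.Nonempty := hFne.mono hFA
  have hFpos : (0:ℝ) < F.card := by exact_mod_cast hFne.card_pos
  have hApos : (0:ℝ) < 𝒜'.card := by exact_mod_cast h𝒜'ne.card_pos
  have hP : (0:ℝ) < (F.card:ℝ)/𝒜'.card := div_pos hFpos hApos
  have hregF := hreg F hFA
  have hdisj : ∀ H ∈ 𝒮, Disjoint S H := by
    intro H hH
    obtain ⟨C, hC, hHC, -⟩ := mem_famShadow'.mp hH
    obtain ⟨A, -, -, rfl⟩ := mem_famRestrict'.mp hC
    exact Finset.disjoint_of_subset_right hHC sdiff_disjoint.symm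
  have hcardH : ∀ H ∈ 𝒮, H.card = h := by
    intro H hH; obtain ⟨A, -, -, hc⟩ := mem_famShadow'.mp hH; exact hc
  have hrr : ∀ H ∈ 𝒮, famRestrict 𝒜' H = famRestrict 𝒜 (S ∪ H) := fun H hH =>
    restrict_restrict 𝒜 S H (hdisj H hH)
  have htermnn : ∀ H, 0 ≤ term H := fun H => div_nonneg (by positivity) (by positivity)
  have hQ : 0 < (∑ H ∈ 𝒮, term H) / (𝒮.card : ℝ) := hregF ▸ hP
  obtain ⟨hsum, h𝒮pos⟩ | ⟨-, h2⟩ := div_pos_iff.mp hQ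
  swap
  · exact absurd h2 (not_lt.mpr (Nat.cast_nonneg _))
  -- there exists a positive term, giving positivity of τ ^ h
  obtain ⟨H₀, hH₀, hpos₀⟩ : ∃ H ∈ 𝒮, 0 < term H := by
    by_contra hcon; push_neg at hcon
    have : ∑ H ∈ 𝒮, term H ≤ 0 := Finset.sum_nonpos hcon
    linarith
  have hden₀nn : (0:ℝ) ≤ ((famRestrict 𝒜 (S ∪ H₀)).card : ℝ) := Nat.cast_nonneg _
  have hpos₀' : 0 < ((famRestrict F H₀).card : ℝ) / ((famRestrict 𝒜 (S ∪ H₀)).card : ℝ) :=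
    hpos₀
  obtain ⟨hnum₀, hden₀⟩ | ⟨-, h2⟩ := div_pos_iff.mp hpos₀'
  swap
  · exact absurd h2 (not_lt.mpr (Nat.cast_nonneg _))
  have hhom₀ := hhom H₀
  rw [hcardH H₀ hH₀, hrr H₀ hH₀] at hhom₀
  have hτ : 0 < τ ^ h := by
    by_contra hc; push_neg at hc
    have h1 : τ ^ h * ((F.card : ℝ) * ((famRestrict 𝒜 (S ∪ H₀)).card : ℝ)) ≤ 0 :=
      mul_nonpos_of_nonpos_of_nonneg hc (by positivity)
    nlinarith [mul_pos hnum₀ hApos]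
  set M : ℝ := τ ^ h * F.card / 𝒜'.card with hM
  have hMpos : 0 < M := div_pos (by positivity) hApos
  -- per-term bound
  have hbound : ∀ H ∈ 𝒮, term H ≤ if H ∈ famShadow F h then M else 0 := by
    intro H hH
    by_cases hHF : H ∈ famShadow F h
    · rw [if_pos hHF]
      show ((famRestrict F H).card : ℝ) / ((famRestrict 𝒜 (S ∪ H)).card : ℝ) ≤ M
      rcases eq_or_lt_of_le (show (0:ℝ) ≤ ((famRestrict 𝒜 (S ∪ H)).card : ℝ) from Nat.cast_nonneg _) with hd0 | hd0
      · rw [← hd0, div_zero]; exact le_of_lt hMpos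
      · have hhomH := hhom H
        rw [hcardH H hH, hrr H hH] at hhomH
        rw [hM, div_le_div_iff₀ hd0 hApos]
        nlinarith
    · rw [if_neg hHF]
      have : famRestrict F H = ∅ := by
        by_contra hne
        obtain ⟨B, hB⟩ := Finset.nonempty_of_ne_empty hne
        obtain ⟨A, hA, hHA, -⟩ := mem_famRestrict'.mp hB
        exact hHF (mem_famShadow'.mpr ⟨A, hA, hHA, hcardH H hH⟩)
      simp [hterm, this]
  have hsumle : ∑ H ∈ 𝒮, term H ≤ ((famShadow F h).card : ℝ) * M := by
    calc ∑ H ∈ 𝒮, term H ≤ ∑ H ∈ 𝒮, (if H ∈ famShadow F h then M else 0) :=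
          Finset.sum_le_sum hbound
      _ = ∑ H ∈ 𝒮.filter (fun H => H ∈ famShadow F h), M := (Finset.sum_filter _ _).symm
      _ = ((𝒮.filter (fun H => H ∈ famShadow F h)).card : ℝ) * M := by
          rw [Finset.sum_const, nsmul_eq_mul]
      _ ≤ ((famShadow F h).card : ℝ) * M := by
          apply mul_le_mul_of_nonneg_right _ (le_of_lt hMpos)
          exact_mod_cast Finset.card_le_card (fun x hx => (Finset.mem_filter.mp hx).2)
  -- combine
  have hkey : (𝒮.card : ℝ) ≤ τ ^ h * ((famShadow F h).card : ℝ) := by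
    have h1 : (F.card:ℝ)/𝒜'.card * 𝒮.card = ∑ H ∈ 𝒮, term H := by
      rw [hregF]; field_simp; rfl
    have h2 : (F.card:ℝ)/𝒜'.card * 𝒮.card ≤
        τ ^ h * ((famShadow F h).card : ℝ) * ((F.card:ℝ)/𝒜'.card) := by
      rw [h1, hM] at *
      calc ∑ H ∈ 𝒮, term H ≤ ((famShadow F h).card : ℝ) * (τ ^ h * F.card / 𝒜'.card) :=
            hsumle
        _ = τ ^ h * ((famShadow F h).card : ℝ) * ((F.card:ℝ)/𝒜'.card) := by ring
      
    have := le_of_mul_le_mul_right (by linarith [h2] : (𝒮.card : ℝ) * ((F.card:ℝ)/𝒜'.card) ≤ (τ ^ h * ((famShadow F h).card : ℝ)) * ((F.card:ℝ)/𝒜'.card)) hP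
    exact this
  rw [zpow_neg, zpow_natCast]
  rw [inv_mul_le_iff₀ hτ]
  exact hkey
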